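/- Lemma 2.6: Assume (BR) with constant branching ratio ρ ∈ (1,∞), and assume the offspring distributions satisfy the uniform first moment condition: there is a probability measure π on ℕ with finite first moment such that π_x({k : k ≥ n}) ≤ π({k : k ≥ n}) for all x ∈ X, n ∈ ℕ. Then there exists s₀ > 0 such that for every probability measure Θ on M and every s ∈ [0, s₀], ∫_M (∫_M e^{−s‖m'‖} dK(m)(m')) dΘ(m) ≤ ∫_M e^{−ρ s‖m‖} dΘ(m) + (∫_M ‖m‖ dΘ(m)) · R_π(s), where both sides are interpreted in [0,∞] and R_π is the remainder function of π. -/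

import Mathlib

open MeasureTheory ProbabilityTheory Filter Topology
open scoped ENNReal NNReal Classical

namespace BMC

variable {X : Type*}

/-- the population space `X →₀ ℕ` over a countable set carries the discrete σ-algebra -/
instance : MeasurableSpace (X →₀ ℕ) := ⊤

/-- size (total mass) of a population -/
def popSize (m : X →₀ ℕ) : ℕ := m.sum fun _ k => k

/-- convolution of measures on populations: pushforward of the product measure under addition -/
noncomputable def popConv (μ ν : Measure (X →₀ ℕ)) : Measure (X →₀ ℕ) :=
  (μ.prod ν).map fun p => p.1 + p.2

/-- the remainder function `R_θ(s) = Σ_k θ(k)·ψ(s·k)`, where `ψ(t) = e^{−t} − 1 + t` -/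
noncomputable def remFn (θ : Measure ℕ) (s : ℝ) : ℝ :=
  ∑' k : ℕ, (θ {k}).toReal * (Real.exp (-(s * k)) - 1 + s * k)

noncomputable def psi (t : ℝ) : ℝ := Real.exp (-t) - 1 + t

lemma psi_nonneg (t : ℝ) : 0 ≤ psi t := by
  have := Real.add_one_le_exp (-t); simp only [psi]; linarith

lemma psi_zero : psi 0 = 0 := by simp [psi]

lemma exp_neg_le_one {t : ℝ} (ht : 0 ≤ t) : Real.exp (-t) ≤ 1 := by
  have : Real.exp (-t) ≤ Real.exp 0 := Real.exp_le_exp.mpr (by linarith)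
  simpa using this

lemma psi_le {t : ℝ} (ht : 0 ≤ t) : psi t ≤ t := by
  have := exp_neg_le_one ht; simp only [psi]; linarith

lemma psi_mono {a b : ℝ} (ha : 0 ≤ a) (hab : a ≤ b) : psi a ≤ psi b := by
  have h1 : Real.exp (-b) = Real.exp (-a) * Real.exp (-(b - a)) := by
    rw [← Real.exp_add]; ring_nf
  have h2 := Real.add_one_le_exp (-(b - a))
  have h3 := exp_neg_le_one ha
  have h4 := (Real.exp_pos (-a)).le
  have h5 := exp_neg_le_one (by linarith : (0:ℝ) ≤ b - a)
  simp only [psi]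
  nlinarith [mul_nonneg (sub_nonneg.mpr h3) (by linarith : (0:ℝ) ≤ 1 - Real.exp (-(b - a)))]

lemma measurableSet_pop (s : Set (X →₀ ℕ)) : MeasurableSet s :=
  MeasurableSpace.measurableSet_top

lemma measurable_pop {β : Type*} [MeasurableSpace β] (f : (X →₀ ℕ) → β) : Measurable f :=
  fun _ _ => MeasurableSpace.measurableSet_top

instance : MeasurableSingletonClass (X →₀ ℕ) := ⟨fun _ => MeasurableSpace.measurableSet_top⟩

lemma popSize_add (m m' : X →₀ ℕ) : popSize (m + m') = popSize m + popSize m' :=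
  Finsupp.sum_add_index' (fun _ => rfl) (fun _ _ _ => rfl)

lemma popSize_single (x : X) (n : ℕ) : popSize (Finsupp.single x n) = n :=
  Finsupp.sum_single_index rfl

lemma popSize_zero : popSize (0 : X →₀ ℕ) = 0 := rfl

lemma le_popSize (m : X →₀ ℕ) (x : X) : m x ≤ popSize m := by
  by_cases h : m x = 0
  · simp [h]
  · exact Finset.single_le_sum (f := fun y => m y) (fun _ _ => Nat.zero_le _)
      (Finsupp.mem_support_iff.mpr h)

lemma popSize_eq_zero {m : X →₀ ℕ} (h : popSize m = 0) : m = 0 := by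
  ext x
  have := le_popSize m x
  simp only [Finsupp.coe_zero, Pi.zero_apply]
  omega

lemma exists_decomp {m : X →₀ ℕ} (h : popSize m ≠ 0) :
    ∃ (x : X) (m' : X →₀ ℕ), m = Finsupp.single x 1 + m' ∧ popSize m' + 1 = popSize m := by
  have hm : m ≠ 0 := fun hh => h (hh ▸ popSize_zero)
  obtain ⟨x, hx⟩ : ∃ x, m x ≠ 0 := by
    by_contra hc; push_neg at hc
    exact hm (Finsupp.ext fun a => hc a)
  have hdec : m = Finsupp.single x 1 + (m - Finsupp.single x 1) := by
    ext y
    rw [Finsupp.add_apply, Finsupp.tsub_apply]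
    by_cases hy : y = x
    · subst hy; rw [Finsupp.single_eq_same]; omega
    · rw [Finsupp.single_eq_of_ne' fun hh => hy hh.symm]; omega
  refine ⟨x, m - Finsupp.single x 1, hdec, ?_⟩
  conv_rhs => rw [hdec]
  rw [popSize_add, popSize_single]; omega

lemma lintegral_psi_layer {α : Type*} [MeasurableSpace α] (hms : ∀ s : Set α, MeasurableSet s)
    (μ : Measure α) (N : α → ℕ) {s : ℝ} (hs : 0 ≤ s) :
    ∫⁻ a, ENNReal.ofReal (psi (s * N a)) ∂μ
      = ∑' n : ℕ, ENNReal.ofReal (psi (s * ((n + 1 : ℕ) : ℝ)) - psi (s * n)) * μ {a | n < N a} := by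
  have hD : ∀ n : ℕ, (0:ℝ) ≤ psi (s * ((n + 1 : ℕ) : ℝ)) - psi (s * n) := by
    intro n
    have : (n:ℝ) ≤ ((n + 1 : ℕ) : ℝ) := by push_cast; linarith
    have := psi_mono (by positivity) (by nlinarith : s * (n:ℝ) ≤ s * ((n + 1 : ℕ) : ℝ))
    linarith
  have hpt : ∀ k : ℕ, ENNReal.ofReal (psi (s * k))
      = ∑' n : ℕ, Set.indicator {j : ℕ | n < j}
          (fun _ => ENNReal.ofReal (psi (s * ((n + 1 : ℕ) : ℝ)) - psi (s * n))) k := by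
    intro k
    rw [tsum_eq_sum (s := Finset.range k) (by
      intro b hb
      simp only [Finset.mem_range, not_lt] at hb
      simp [Set.indicator_apply, Nat.lt_irrefl, not_lt.mpr hb])]
    have : ∀ n ∈ Finset.range k, Set.indicator {j : ℕ | n < j}
          (fun _ => ENNReal.ofReal (psi (s * ((n + 1 : ℕ) : ℝ)) - psi (s * n))) k
        = ENNReal.ofReal (psi (s * ((n + 1 : ℕ) : ℝ)) - psi (s * n)) := by
      intro n hn
      exact Set.indicator_of_mem (show k ∈ {j : ℕ | n < j} from Finset.mem_range.mp hn) _
    rw [Finset.sum_congr rfl this,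
      ← ENNReal.ofReal_sum_of_nonneg (fun n _ => hD n)]
    congr 1
    have := Finset.sum_range_sub (f := fun n : ℕ => psi (s * n)) k
    rw [this]
    simp [psi_zero]
  calc ∫⁻ a, ENNReal.ofReal (psi (s * N a)) ∂μ
      = ∫⁻ a, ∑' n : ℕ, Set.indicator {a' | n < N a'}
          (fun _ => ENNReal.ofReal (psi (s * ((n + 1 : ℕ) : ℝ)) - psi (s * n))) a ∂μ := by
        apply lintegral_congr
        intro a
        rw [hpt (N a)]
        exact tsum_congr fun n => by simp [Set.indicator_apply]
    _ = ∑' n : ℕ, ∫⁻ a, Set.indicator {a' | n < N a'}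
          (fun _ => ENNReal.ofReal (psi (s * ((n + 1 : ℕ) : ℝ)) - psi (s * n))) a ∂μ :=
        lintegral_tsum fun n => (measurable_const.indicator (hms _)).aemeasurable
    _ = ∑' n : ℕ, ENNReal.ofReal (psi (s * ((n + 1 : ℕ) : ℝ)) - psi (s * n)) * μ {a | n < N a} := by
        refine tsum_congr fun n => ?_
        rw [lintegral_indicator (hms _), setLIntegral_const]

lemma measurableSet_prod_pop [Countable X] (s : Set ((X →₀ ℕ) × (X →₀ ℕ))) :
    MeasurableSet s := by
  have hsing : ∀ p : (X →₀ ℕ) × (X →₀ ℕ), MeasurableSet ({p} : Set _) := fun p => by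
    have : ({p} : Set ((X →₀ ℕ) × (X →₀ ℕ))) = {p.1} ×ˢ {p.2} := by
      rw [Set.singleton_prod_singleton]
    rw [this]
    exact (measurableSet_pop _).prod (measurableSet_pop _)
  rw [← Set.biUnion_of_singleton s]
  exact MeasurableSet.biUnion (Set.to_countable s) fun p _ => hsing p

lemma lintegral_exp_popConv [Countable X] (μ ν : Measure (X →₀ ℕ)) [SFinite μ] [SFinite ν]
    (s : ℝ) :
    ∫⁻ m, ENNReal.ofReal (Real.exp (-(s * popSize m))) ∂(popConv μ ν)
      = (∫⁻ m, ENNReal.ofReal (Real.exp (-(s * popSize m))) ∂μ)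
        * ∫⁻ m, ENNReal.ofReal (Real.exp (-(s * popSize m))) ∂ν := by
  have hmul : ∀ a b : X →₀ ℕ, ENNReal.ofReal (Real.exp (-(s * popSize (a + b))))
      = ENNReal.ofReal (Real.exp (-(s * popSize a)))
        * ENNReal.ofReal (Real.exp (-(s * popSize b))) := by
    intro a b
    rw [← ENNReal.ofReal_mul (Real.exp_nonneg _), ← Real.exp_add]
    congr 2
    rw [popSize_add]; push_cast; ring
  rw [popConv, lintegral_map (measurable_pop _) (fun _ _ => measurableSet_prod_pop _),
    lintegral_prod _ (Measurable.aemeasurable fun _ _ => measurableSet_prod_pop _)]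
  simp only [hmul]
  calc ∫⁻ a, ∫⁻ b, ENNReal.ofReal (Real.exp (-(s * popSize a)))
          * ENNReal.ofReal (Real.exp (-(s * popSize b))) ∂ν ∂μ
      = ∫⁻ a, ENNReal.ofReal (Real.exp (-(s * popSize a)))
          * ∫⁻ b, ENNReal.ofReal (Real.exp (-(s * popSize b))) ∂ν ∂μ := by
        refine lintegral_congr fun a => ?_
        rw [lintegral_const_mul _ (measurable_pop _)]
    _ = _ := lintegral_mul_const _ (measurable_pop _)




/-- Lemma 2.6. Under (BR) with `ρ ∈ (1,∞)` and the uniform first moment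
condition with dominating measure `π`, there is `s₀ > 0` such that for every probability
measure `Θ` on the population space and all `s ∈ [0,s₀]`,
`G_{ΘP}(s) ≤ G_Θ(ρs) + Θ̄·R_π(s)` (in `[0,∞]`). -/
theorem laplace_transform_bound [Countable X]
    (Pibr : X → Measure (X →₀ ℕ)) (hPibr : ∀ x, IsProbabilityMeasure (Pibr x))
    (K : Kernel (X →₀ ℕ) (X →₀ ℕ)) [IsMarkovKernel K]
    (hK0 : K 0 = Measure.dirac 0)
    (hKs : ∀ x : X, K (Finsupp.single x 1) = Pibr x)
    (hKadd : ∀ m m' : X →₀ ℕ, K (m + m') = popConv (K m) (K m'))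
    (ρ : ℝ) (hρ : 1 < ρ)
    (hBR : ∀ x : X, ∫⁻ m, (popSize m : ℝ≥0∞) ∂(Pibr x) = ENNReal.ofReal ρ)
    -- uniform first moment condition: π has finite first moment and dominates every π_x
    (π : Measure ℕ) (hπ : IsProbabilityMeasure π)
    (hπmom : ∫⁻ k : ℕ, (k : ℝ≥0∞) ∂π ≠ ⊤)
    (hdom : ∀ (x : X) (n : ℕ), Pibr x {m | n ≤ popSize m} ≤ π {k | n ≤ k}) :
    ∃ s₀ > (0 : ℝ), ∀ Θ : Measure (X →₀ ℕ), IsProbabilityMeasure Θ →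
      ∀ s ∈ Set.Icc (0 : ℝ) s₀,
        ∫⁻ m, (∫⁻ m', ENNReal.ofReal (Real.exp (-(s * popSize m'))) ∂(K m)) ∂Θ
          ≤ (∫⁻ m, ENNReal.ofReal (Real.exp (-(ρ * s * popSize m))) ∂Θ)
            + (∫⁻ m, (popSize m : ℝ≥0∞) ∂Θ) * ENNReal.ofReal (remFn π s) := by
  refine ⟨1, one_pos, fun Θ hΘ s hs => ?_⟩
  obtain ⟨hs0, -⟩ := hs
  have hρ0 : (0:ℝ) < ρ := lt_trans one_pos hρ
  have hρs : (0:ℝ) ≤ ρ * s := mul_nonneg hρ0.le hs0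
  set R : ℝ≥0∞ := ENNReal.ofReal (remFn π s) with hRdef
  -- the ψ-integral over π equals R and is finite
  have hTsum : ∫⁻ k : ℕ, ENNReal.ofReal (psi (s * k)) ∂π
      = ∑' k : ℕ, ENNReal.ofReal (psi (s * k)) * π {k} := lintegral_countable' _
  have hTfin : ∫⁻ k : ℕ, ENNReal.ofReal (psi (s * k)) ∂π ≠ ⊤ := by
    have hle : ∫⁻ k : ℕ, ENNReal.ofReal (psi (s * k)) ∂π
        ≤ ENNReal.ofReal s * ∫⁻ k : ℕ, (k : ℝ≥0∞) ∂π := by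
      rw [← lintegral_const_mul _ (Measurable.of_discrete)]
      refine lintegral_mono fun k => ?_
      calc ENNReal.ofReal (psi (s * k))
          ≤ ENNReal.ofReal (s * k) :=
            ENNReal.ofReal_le_ofReal (psi_le (mul_nonneg hs0 (Nat.cast_nonneg _)))
        _ = ENNReal.ofReal s * (k : ℝ≥0∞) := by
            rw [ENNReal.ofReal_mul hs0, ENNReal.ofReal_natCast]
    exact ne_top_of_le_ne_top (ENNReal.mul_ne_top ENNReal.ofReal_ne_top hπmom) hle
  have hRT : R = ∫⁻ k : ℕ, ENNReal.ofReal (psi (s * k)) ∂π := by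
    rw [hTsum] at hTfin ⊢
    have h1 : remFn π s = (∑' k : ℕ, ENNReal.ofReal (psi (s * k)) * π {k}).toReal := by
      rw [ENNReal.tsum_toReal_eq
        (fun k => ENNReal.mul_ne_top ENNReal.ofReal_ne_top (measure_ne_top _ _))]
      refine tsum_congr fun k => ?_
      rw [ENNReal.toReal_mul, ENNReal.toReal_ofReal (psi_nonneg _)]
      simp only [psi]
      ring
    rw [hRdef, h1, ENNReal.ofReal_toReal hTfin]
  -- layer-cake domination
  have hpsix : ∀ x : X, ∫⁻ m, ENNReal.ofReal (psi (s * popSize m)) ∂(Pibr x) ≤ R := by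
    intro x
    rw [hRT, lintegral_psi_layer measurableSet_pop (Pibr x) popSize hs0,
      lintegral_psi_layer (fun _ => MeasurableSet.of_discrete) π (fun k => k) hs0]
    refine ENNReal.tsum_le_tsum fun n => mul_le_mul_right ?_ _
    have h1 : {m : X →₀ ℕ | n < popSize m} = {m | n + 1 ≤ popSize m} := by
      ext m; simp only [Set.mem_setOf_eq]; omega
    have h2 : {k : ℕ | n < k} = {k | n + 1 ≤ k} := by
      ext k; simp only [Set.mem_setOf_eq]; omega
    rw [h1, h2]
    exact hdom x (n + 1)
  -- single-site bound
  have hx1 : ∀ x : X, ∫⁻ m, ENNReal.ofReal (Real.exp (-(s * popSize m))) ∂(Pibr x)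
      ≤ ENNReal.ofReal (Real.exp (-(ρ * s))) + R := by
    intro x
    haveI := hPibr x
    have hmean : ∫⁻ m, ENNReal.ofReal (s * popSize m) ∂(Pibr x)
        = ENNReal.ofReal (s * ρ) := by
      have hpt : ∀ m : X →₀ ℕ, ENNReal.ofReal (s * (popSize m : ℝ))
          = ENNReal.ofReal s * (popSize m : ℝ≥0∞) := fun m => by
        rw [ENNReal.ofReal_mul hs0, ENNReal.ofReal_natCast]
      simp only [hpt]
      rw [lintegral_const_mul _ (measurable_pop _), hBR x, ← ENNReal.ofReal_mul hs0]
    have hsplit : ∫⁻ m, ENNReal.ofReal (Real.exp (-(s * popSize m))) ∂(Pibr x)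
          + ENNReal.ofReal (s * ρ)
        = 1 + ∫⁻ m, ENNReal.ofReal (psi (s * popSize m)) ∂(Pibr x) := by
      rw [← hmean, ← lintegral_add_left (measurable_pop _)]
      have hL : ∀ m : X →₀ ℕ,
          ENNReal.ofReal (Real.exp (-(s * popSize m))) + ENNReal.ofReal (s * (popSize m : ℝ))
            = 1 + ENNReal.ofReal (psi (s * popSize m)) := by
        intro m
        rw [← ENNReal.ofReal_add (Real.exp_nonneg _) (mul_nonneg hs0 (Nat.cast_nonneg _)),
          ← ENNReal.ofReal_one,
          ← ENNReal.ofReal_add zero_le_one (psi_nonneg _)]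
        congr 1
        simp only [psi]
        ring
      simp only [hL]
      rw [lintegral_add_left measurable_const, lintegral_one, measure_univ]
    have hone : (1:ℝ≥0∞) ≤ ENNReal.ofReal (Real.exp (-(ρ * s))) + ENNReal.ofReal (s * ρ) := by
      rw [← ENNReal.ofReal_add (Real.exp_nonneg _) (mul_nonneg hs0 hρ0.le),
        ← ENNReal.ofReal_one]
      refine ENNReal.ofReal_le_ofReal ?_
      have h := psi_nonneg (ρ * s)
      simp only [psi] at h
      have := mul_comm s ρ
      linarith
    rw [← ENNReal.add_le_add_iff_right (a := ENNReal.ofReal (s * ρ)) ENNReal.ofReal_ne_top, hsplit]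
    calc 1 + ∫⁻ m, ENNReal.ofReal (psi (s * popSize m)) ∂(Pibr x)
        ≤ (ENNReal.ofReal (Real.exp (-(ρ * s))) + ENNReal.ofReal (s * ρ)) + R :=
          add_le_add hone (hpsix x)
      _ = ENNReal.ofReal (Real.exp (-(ρ * s))) + R + ENNReal.ofReal (s * ρ) := by ring
  -- pointwise bound via induction on the population size
  set a : ℝ≥0∞ := ENNReal.ofReal (Real.exp (-(ρ * s))) with hadef
  have ha1 : a ≤ 1 := by
    rw [hadef, ← ENNReal.ofReal_one]
    exact ENNReal.ofReal_le_ofReal (exp_neg_le_one hρs)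
  have hle1 : ∀ μ : Measure (X →₀ ℕ), IsProbabilityMeasure μ →
      ∫⁻ m, ENNReal.ofReal (Real.exp (-(s * popSize m))) ∂μ ≤ 1 := by
    intro μ hμ
    calc ∫⁻ m, ENNReal.ofReal (Real.exp (-(s * popSize m))) ∂μ ≤ ∫⁻ _, 1 ∂μ :=
        lintegral_mono fun m => by
          rw [← ENNReal.ofReal_one]
          exact ENNReal.ofReal_le_ofReal
            (exp_neg_le_one (mul_nonneg hs0 (Nat.cast_nonneg _)))
      _ = 1 := by rw [lintegral_one, measure_univ]
  have hpoint : ∀ (n : ℕ) (m : X →₀ ℕ), popSize m = n →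
      ∫⁻ m', ENNReal.ofReal (Real.exp (-(s * popSize m'))) ∂(K m)
        ≤ a ^ n + (n : ℝ≥0∞) * R := by
    intro n
    induction n with
    | zero =>
      intro m hm
      have h0 : m = 0 := popSize_eq_zero hm
      subst h0
      rw [hK0, lintegral_dirac]
      simp [popSize_zero]
    | succ n ih =>
      intro m hm
      obtain ⟨x, m', hdec, hsz⟩ := exists_decomp (by omega : popSize m ≠ 0)
      haveI := hPibr x
      rw [hdec, hKadd, lintegral_exp_popConv, hKs x]
      have hg' := ih m' (by omega)
      have hg'1 : ∫⁻ m'', ENNReal.ofReal (Real.exp (-(s * popSize m''))) ∂(K m') ≤ 1 :=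
        hle1 _ inferInstance
      calc (∫⁻ m'', ENNReal.ofReal (Real.exp (-(s * popSize m''))) ∂(Pibr x))
            * ∫⁻ m'', ENNReal.ofReal (Real.exp (-(s * popSize m''))) ∂(K m')
          ≤ (a + R) * ∫⁻ m'', ENNReal.ofReal (Real.exp (-(s * popSize m''))) ∂(K m') :=
            mul_le_mul_left (hx1 x) _
        _ = a * (∫⁻ m'', ENNReal.ofReal (Real.exp (-(s * popSize m''))) ∂(K m'))
              + R * ∫⁻ m'', ENNReal.ofReal (Real.exp (-(s * popSize m''))) ∂(K m') := by
            rw [add_mul]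
        _ ≤ a * (a ^ n + (n : ℝ≥0∞) * R) + R * 1 :=
            add_le_add (mul_le_mul_right hg' a) (mul_le_mul_right hg'1 R)
        _ = a ^ (n + 1) + (a * ((n : ℝ≥0∞) * R) + R) := by ring
        _ ≤ a ^ (n + 1) + ((n : ℝ≥0∞) * R + R) := by
            refine add_le_add le_rfl (add_le_add ?_ le_rfl)
            calc a * ((n : ℝ≥0∞) * R) ≤ 1 * ((n : ℝ≥0∞) * R) := mul_le_mul_left ha1 _
              _ = (n : ℝ≥0∞) * R := one_mul _
        _ = a ^ (n + 1) + ((n + 1 : ℕ) : ℝ≥0∞) * R := by push_cast; ring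
  -- assemble
  calc ∫⁻ m, (∫⁻ m', ENNReal.ofReal (Real.exp (-(s * popSize m'))) ∂(K m)) ∂Θ
      ≤ ∫⁻ m, (a ^ popSize m + (popSize m : ℝ≥0∞) * R) ∂Θ :=
        lintegral_mono fun m => hpoint (popSize m) m rfl
    _ = ∫⁻ m, a ^ popSize m ∂Θ + (∫⁻ m, (popSize m : ℝ≥0∞) ∂Θ) * R := by
        rw [lintegral_add_left (measurable_pop _)]
        congr 1
        exact lintegral_mul_const _ (measurable_pop _)
    _ = (∫⁻ m, ENNReal.ofReal (Real.exp (-(ρ * s * popSize m))) ∂Θ)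
          + (∫⁻ m, (popSize m : ℝ≥0∞) ∂Θ) * R := by
        congr 1
        refine lintegral_congr fun m => ?_
        rw [hadef, ← ENNReal.ofReal_pow (Real.exp_nonneg _), ← Real.exp_nat_mul]
        congr 2
        ring

end BMC
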